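/- Let f : ℝ × ℝ → ℝ be nonnegative measurable, Φ : ℝ³ → ℝ axisymmetric (depending only on R = √(x²+y²) and z), and define F(r,v) = f(E, L_z) with E = ‖v‖²/2 + Φ(r) and L_z = x·v_y − y·v_x. Then the density ρ(r) = ∫_{ℝ³} F(r,v) dv equals (2π/R)·∬_{L_z² ≤ 2R²(E − Φ)} f(E, L_z) dE dL_z for R > 0; in particular, at fixed R the density depends on z only through Φ(R,z). -/

import Mathlib

open MeasureTheory Set ENNReal

noncomputable def rot3 (a b : ℝ) (hab : a ^ 2 + b ^ 2 = 1) :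
    EuclideanSpace ℝ (Fin 3) ≃ₗᵢ[ℝ] EuclideanSpace ℝ (Fin 3) where
  toFun w := WithLp.toLp 2 ![a * w 0 - b * w 1, b * w 0 + a * w 1, w 2]
  invFun w := WithLp.toLp 2 ![a * w 0 + b * w 1, -b * w 0 + a * w 1, w 2]
  map_add' u v := by
    ext i
    fin_cases i <;>
      simp [PiLp.add_apply, Matrix.cons_val_zero, Matrix.cons_val_one] <;> ring
  map_smul' c u := by
    ext i
    fin_cases i <;>
      simp [PiLp.smul_apply, smul_eq_mul] <;> ring
  left_inv w := by
    ext i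
    fin_cases i <;> simp <;>
      first
      | linear_combination (w 0) * hab
      | linear_combination (w 1) * hab
  right_inv w := by
    ext i
    fin_cases i <;> simp <;>
      first
      | linear_combination (w 0) * hab
      | linear_combination (w 1) * hab
  norm_map' w := by
    simp only [LinearEquiv.coe_mk, LinearMap.coe_mk, AddHom.coe_mk, EuclideanSpace.norm_eq]
    congr 1
    rw [Fin.sum_univ_three, Fin.sum_univ_three]
    simp only [Matrix.cons_val_zero, Matrix.cons_val_one, Matrix.head_cons, Real.norm_eq_abs,
      sq_abs, Matrix.cons_val_two, Matrix.tail_cons, PiLp.toLp_apply, WithLp.ofLp_toLp]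
    nlinarith [hab]

open MeasureTheory Set ENNReal Real

theorem lintegral_comp_polarCoord_symm' (g : ℝ × ℝ → ℝ≥0∞) :
    (∫⁻ p in polarCoord.target, ENNReal.ofReal p.1 * g (polarCoord.symm p)) = ∫⁻ p, g p := by
  set B : ℝ × ℝ → ℝ × ℝ →L[ℝ] ℝ × ℝ := fun p =>
    LinearMap.toContinuousLinearMap (Matrix.toLin (Module.Basis.finTwoProd ℝ) (Module.Basis.finTwoProd ℝ)
      !![Real.cos p.2, -p.1 * Real.sin p.2; Real.sin p.2, p.1 * Real.cos p.2])
  have A : ∀ p ∈ polarCoord.target,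
      HasFDerivWithinAt polarCoord.symm (B p) polarCoord.target p :=
    fun p _ => (hasFDerivAt_polarCoord_symm p).hasFDerivWithinAt
  have B_det : ∀ p, (B p).det = p.1 := by
    intro p
    conv_rhs => rw [← one_mul p.1, ← cos_sq_add_sin_sq p.2]
    simp only [B, neg_mul, LinearMap.det_toContinuousLinearMap, LinearMap.det_toLin,
      Matrix.det_fin_two_of, sub_neg_eq_add]
    ring
  have hinj : Set.InjOn polarCoord.symm polarCoord.target :=
    polarCoord.symm_source ▸ polarCoord.symm.injOn
  symm
  calc
    ∫⁻ p, g p = ∫⁻ p in polarCoord.source, g p := by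
      rw [← setLIntegral_univ]
      exact setLIntegral_congr polarCoord_source_ae_eq_univ.symm
    _ = ∫⁻ p in polarCoord.symm '' polarCoord.target, g p := by
      rw [polarCoord.symm_image_target_eq_source]
    _ = ∫⁻ p in polarCoord.target, ENNReal.ofReal |(B p).det| * g (polarCoord.symm p) := by
      exact lintegral_image_eq_lintegral_abs_det_fderiv_mul volume
        polarCoord.open_target.measurableSet A hinj g
    _ = ∫⁻ p in polarCoord.target, ENNReal.ofReal p.1 * g (polarCoord.symm p) := by
      refine setLIntegral_congr_fun polarCoord.open_target.measurableSet
        (fun p hp => ?_)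
      rw [B_det, abs_of_pos hp.1]

theorem lintegral_image_eq_lintegral_abs_deriv_mul' {s : Set ℝ} {f : ℝ → ℝ} {f' : ℝ → ℝ}
    (hs : MeasurableSet s) (hf' : ∀ x ∈ s, HasDerivWithinAt f (f' x) s x)
    (hf : InjOn f s) (g : ℝ → ℝ≥0∞) :
    ∫⁻ x in f '' s, g x = ∫⁻ x in s, ENNReal.ofReal |f' x| * g (f x) := by
  simpa only [ContinuousLinearMap.det_toSpanSingleton] using
    lintegral_image_eq_lintegral_abs_det_fderiv_mul volume hs
      (fun x hx => (hf' x hx).hasFDerivWithinAt) hf g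

theorem lintegral_half_sq_add (g : ℝ → ℝ≥0∞) (c : ℝ) :
    ∫⁻ r in Ioi (0:ℝ), ENNReal.ofReal r * g (r ^ 2 / 2 + c) = ∫⁻ E in Ioi c, g E := by
  have himg : (fun r => r ^ 2 / 2 + c) '' Ioi (0:ℝ) = Ioi c := by
    ext E
    constructor
    · rintro ⟨r, hr, rfl⟩
      have hr' : (0:ℝ) < r := hr
      have : 0 < r ^ 2 / 2 := by positivity
      simp only [mem_Ioi]
      linarith
    · intro hE
      have hE' : c < E := hE
      refine ⟨Real.sqrt (2 * (E - c)), ?_, ?_⟩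
      · exact Real.sqrt_pos.2 (by linarith)
      · simp only
        rw [Real.sq_sqrt (by linarith)]
        ring
  have hderiv : ∀ r ∈ Ioi (0:ℝ), HasDerivWithinAt (fun r => r ^ 2 / 2 + c) r (Ioi 0) r := by
    intro r hr
    have := (((hasDerivAt_pow 2 r).div_const 2).add_const c).hasDerivWithinAt (s := Ioi 0)
    exact this.congr_deriv (by norm_num)
  have hinj : InjOn (fun r => r ^ 2 / 2 + c) (Ioi 0) := by
    intro a ha b hb hab
    have ha' : (0:ℝ) < a := ha
    have hb' : (0:ℝ) < b := hb
    have h2 : a ^ 2 = b ^ 2 := by simp only at hab; linarith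
    nlinarith
  rw [← himg, lintegral_image_eq_lintegral_abs_deriv_mul' measurableSet_Ioi hderiv hinj g]
  refine setLIntegral_congr_fun measurableSet_Ioi (fun r hr => ?_)
  rw [abs_of_pos hr]

theorem lintegral_planar (g : ℝ → ℝ≥0∞) (hg : Measurable g) (c : ℝ) :
    ∫⁻ p : ℝ × ℝ, g ((p.1 ^ 2 + p.2 ^ 2) / 2 + c) =
      ENNReal.ofReal (2 * Real.pi) * ∫⁻ E in Ioi c, g E := by
  rw [← lintegral_comp_polarCoord_symm' (fun p => g ((p.1 ^ 2 + p.2 ^ 2) / 2 + c))]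
  have h1 : ∀ p : ℝ × ℝ, ((polarCoord.symm p).1 ^ 2 + (polarCoord.symm p).2 ^ 2)
      = p.1 ^ 2 := by
    intro p
    rw [polarCoord_symm_apply]
    simp only
    rw [mul_pow, mul_pow, ← mul_add, Real.cos_sq_add_sin_sq, mul_one]
  simp only [h1]
  rw [polarCoord_target, Measure.volume_eq_prod ℝ ℝ, ← Measure.prod_restrict]
  have hm : Measurable fun p : ℝ × ℝ => ENNReal.ofReal p.1 * g (p.1 ^ 2 / 2 + c) := by
    apply Measurable.mul
    · exact ENNReal.measurable_ofReal.comp measurable_fst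
    · exact hg.comp (by fun_prop)
  rw [lintegral_prod _ hm.aemeasurable]
  simp only [lintegral_const, Measure.restrict_apply MeasurableSet.univ, univ_inter,
    Real.volume_Ioo]
  rw [lintegral_mul_const' _ _ (by simp), lintegral_half_sq_add g c, mul_comm]
  congr 1
  ring

theorem key_lintegral (f : ℝ → ℝ → ℝ) (hf : Measurable (fun p : ℝ × ℝ => f p.1 p.2))
    {R : ℝ} (hR : 0 < R) {x y : ℝ} (hxy : x ^ 2 + y ^ 2 = R ^ 2) (c : ℝ) :
    ∫⁻ v : EuclideanSpace ℝ (Fin 3),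
        ENNReal.ofReal (f (‖v‖ ^ 2 / 2 + c) (x * v 1 - y * v 0)) =
      ENNReal.ofReal (2 * Real.pi / R) *
        ∫⁻ p : ℝ × ℝ in {p : ℝ × ℝ | p.2 ^ 2 ≤ 2 * R ^ 2 * (p.1 - c)},
          ENNReal.ofReal (f p.1 p.2) := by
  have hR0 : R ≠ 0 := hR.ne'
  -- rotation
  have hab : (x / R) ^ 2 + (y / R) ^ 2 = 1 := by
    field_simp
    linarith [hxy]
  set e := rot3 (x / R) (y / R) hab with he
  have e0 : ∀ w : EuclideanSpace ℝ (Fin 3), (e w) 0 = (x / R) * w 0 - (y / R) * w 1 :=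
    fun w => rfl
  have e1 : ∀ w : EuclideanSpace ℝ (Fin 3), (e w) 1 = (y / R) * w 0 + (x / R) * w 1 :=
    fun w => rfl
  have hL : ∀ w : EuclideanSpace ℝ (Fin 3), x * (e w) 1 - y * (e w) 0 = R * w 1 := by
    intro w
    rw [e0, e1]
    field_simp
    linear_combination (w 1) * hxy
  have step1 : ∫⁻ v : EuclideanSpace ℝ (Fin 3),
      ENNReal.ofReal (f (‖v‖ ^ 2 / 2 + c) (x * v 1 - y * v 0)) =
      ∫⁻ w : EuclideanSpace ℝ (Fin 3),
        ENNReal.ofReal (f (‖w‖ ^ 2 / 2 + c) (R * w 1)) := by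
    rw [← e.measurePreserving.lintegral_comp_emb
      (e.toHomeomorph.measurableEmbedding)
      (fun v => ENNReal.ofReal (f (‖v‖ ^ 2 / 2 + c) (x * v 1 - y * v 0)))]
    refine lintegral_congr fun w => ?_
    rw [hL w, e.norm_map]
  rw [step1]
  -- transfer to Pi space
  have step2 : ∫⁻ w : EuclideanSpace ℝ (Fin 3),
      ENNReal.ofReal (f (‖w‖ ^ 2 / 2 + c) (R * w 1)) =
      ∫⁻ u : Fin 3 → ℝ,
        ENNReal.ofReal (f ((u 0 ^ 2 + u 1 ^ 2 + u 2 ^ 2) / 2 + c) (R * u 1)) := by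
    rw [← ((EuclideanSpace.volume_preserving_symm_measurableEquiv_toLp (Fin 3)).symm
        (MeasurableEquiv.toLp 2 (Fin 3 → ℝ)).symm).lintegral_comp_emb
      (MeasurableEquiv.measurableEmbedding _)
      (fun w => ENNReal.ofReal (f (‖w‖ ^ 2 / 2 + c) (R * w 1)))]
    refine lintegral_congr fun u => ?_
    have happ : ∀ i, ((MeasurableEquiv.toLp 2 (Fin 3 → ℝ)).symm.symm u) i = u i := by
      intro i
      rfl
    have hnrm : ‖(MeasurableEquiv.toLp 2 (Fin 3 → ℝ)).symm.symm u‖ ^ 2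
        = u 0 ^ 2 + u 1 ^ 2 + u 2 ^ 2 := by
      rw [EuclideanSpace.norm_eq, Real.sq_sqrt (by positivity)]
      rw [Fin.sum_univ_three]
      simp only [happ, Real.norm_eq_abs, sq_abs]
    rw [hnrm, happ]
  rw [step2]
  -- split off coordinate 1
  have step3 : ∫⁻ u : Fin 3 → ℝ,
      ENNReal.ofReal (f ((u 0 ^ 2 + u 1 ^ 2 + u 2 ^ 2) / 2 + c) (R * u 1)) =
      ∫⁻ q : ℝ × (Fin 2 → ℝ),
        ENNReal.ofReal (f ((q.2 0 ^ 2 + q.1 ^ 2 + q.2 1 ^ 2) / 2 + c) (R * q.1)) := by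
    rw [← ((volume_preserving_piFinSuccAbove (fun _ : Fin 3 => ℝ) 1).symm
        (MeasurableEquiv.piFinSuccAbove (fun _ : Fin 3 => ℝ) 1)).lintegral_comp_emb
      (MeasurableEquiv.measurableEmbedding _)
      (fun u => ENNReal.ofReal (f ((u 0 ^ 2 + u 1 ^ 2 + u 2 ^ 2) / 2 + c) (R * u 1)))]
    refine lintegral_congr fun q => ?_
    have h0 : Fin.insertNth (α := fun _ : Fin 3 => ℝ) (1 : Fin 3) q.1 q.2 0 = q.2 0 := by
      have h : (0 : Fin 3) = (1 : Fin 3).succAbove 0 := rfl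
      rw [h, Fin.insertNth_apply_succAbove]
    have h2 : Fin.insertNth (α := fun _ : Fin 3 => ℝ) (1 : Fin 3) q.1 q.2 2 = q.2 1 := by
      have h : (2 : Fin 3) = (1 : Fin 3).succAbove 1 := rfl
      rw [h, Fin.insertNth_apply_succAbove]
    simp only [MeasurableEquiv.piFinSuccAbove_symm_apply, Fin.insertNthEquiv_apply, h0, h2, Fin.insertNth_apply_same]
  rw [step3]
  have hm3 : Measurable fun q : ℝ × (Fin 2 → ℝ) =>
      ENNReal.ofReal (f ((q.2 0 ^ 2 + q.1 ^ 2 + q.2 1 ^ 2) / 2 + c) (R * q.1)) := by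
    apply ENNReal.measurable_ofReal.comp
    have hg : Measurable fun q : ℝ × (Fin 2 → ℝ) =>
        ((q.2 0 ^ 2 + q.1 ^ 2 + q.2 1 ^ 2) / 2 + c, R * q.1) := by
      refine Measurable.prodMk ?_ (measurable_fst.const_mul R)
      have m0 : Measurable fun q : ℝ × (Fin 2 → ℝ) => q.2 0 :=
        (measurable_pi_apply 0).comp measurable_snd
      have m1 : Measurable fun q : ℝ × (Fin 2 → ℝ) => q.2 1 :=
        (measurable_pi_apply 1).comp measurable_snd
      exact ((((m0.pow_const 2).add (measurable_fst.pow_const 2)).add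
        (m1.pow_const 2)).div_const 2).add_const c
    exact hf.comp hg
  rw [Measure.volume_eq_prod ℝ (Fin 2 → ℝ), lintegral_prod _ hm3.aemeasurable]
  -- set up the indicator function on the (E, L) plane
  set T : Set (ℝ × ℝ) := {p : ℝ × ℝ | p.2 ^ 2 / (2 * R ^ 2) + c < p.1} with hTdef
  have hTmeas : MeasurableSet T := measurableSet_lt (by fun_prop) measurable_fst
  set K : ℝ × ℝ → ℝ≥0∞ := T.indicator (fun p => ENNReal.ofReal (f p.1 p.2)) with hKdef
  have hKmeas : Measurable K := (ENNReal.measurable_ofReal.comp hf).indicator hTmeas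
  set H : ℝ → ℝ≥0∞ := fun L => ∫⁻ E, K (E, L) with hHdef
  have hHmeas : Measurable H := hKmeas.lintegral_prod_left'
  have hRt : ∀ t : ℝ, (R * t) ^ 2 / (2 * R ^ 2) = t ^ 2 / 2 := by
    intro t; field_simp
  calc
    ∫⁻ t : ℝ, ∫⁻ m : Fin 2 → ℝ,
        ENNReal.ofReal (f ((m 0 ^ 2 + t ^ 2 + m 1 ^ 2) / 2 + c) (R * t))
      = ∫⁻ t : ℝ, ENNReal.ofReal (2 * Real.pi) * H (R * t) := by
        refine lintegral_congr fun t => ?_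
        have hmg : Measurable fun E => ENNReal.ofReal (f E (R * t)) := by
          apply ENNReal.measurable_ofReal.comp
          exact hf.comp
            (measurable_id.prodMk measurable_const : Measurable fun E : ℝ => (E, R * t))
        calc
          ∫⁻ m : Fin 2 → ℝ,
              ENNReal.ofReal (f ((m 0 ^ 2 + t ^ 2 + m 1 ^ 2) / 2 + c) (R * t))
            = ∫⁻ p : ℝ × ℝ,
                ENNReal.ofReal (f ((p.1 ^ 2 + p.2 ^ 2) / 2 + (t ^ 2 / 2 + c)) (R * t)) := by
              rw [← ((volume_preserving_finTwoArrow ℝ).symm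
                  (MeasurableEquiv.finTwoArrow)).lintegral_comp_emb
                (MeasurableEquiv.measurableEmbedding _)
                (fun m : Fin 2 → ℝ =>
                  ENNReal.ofReal (f ((m 0 ^ 2 + t ^ 2 + m 1 ^ 2) / 2 + c) (R * t)))]
              refine lintegral_congr fun p => ?_
              have ha : ((MeasurableEquiv.finTwoArrow :
                  (Fin 2 → ℝ) ≃ᵐ ℝ × ℝ).symm p) 0 = p.1 := rfl
              have hb : ((MeasurableEquiv.finTwoArrow :
                  (Fin 2 → ℝ) ≃ᵐ ℝ × ℝ).symm p) 1 = p.2 := rfl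
              rw [ha, hb]
              congr 2
              ring
          _ = ENNReal.ofReal (2 * Real.pi) *
                ∫⁻ E in Set.Ioi (t ^ 2 / 2 + c), ENNReal.ofReal (f E (R * t)) :=
              lintegral_planar _ hmg _
          _ = ENNReal.ofReal (2 * Real.pi) * H (R * t) := by
              congr 1
              rw [hHdef]
              simp only
              rw [← lintegral_indicator measurableSet_Ioi]
              refine lintegral_congr fun E => ?_
              by_cases h : t ^ 2 / 2 + c < E
              · rw [Set.indicator_of_mem (Set.mem_Ioi.2 h), hKdef,
                  Set.indicator_of_mem]
                show (R * t) ^ 2 / (2 * R ^ 2) + c < E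
                rw [hRt t]; exact h
              · rw [Set.indicator_of_notMem (by simpa using h), hKdef,
                  Set.indicator_of_notMem]
                intro hmem
                apply h
                have : (R * t) ^ 2 / (2 * R ^ 2) + c < E := hmem
                rw [hRt t] at this; exact this
    _ = ENNReal.ofReal (2 * Real.pi) * ∫⁻ t : ℝ, H (R * t) :=
        lintegral_const_mul' _ _ ENNReal.ofReal_ne_top
    _ = ENNReal.ofReal (2 * Real.pi) * (ENNReal.ofReal |R⁻¹| * ∫⁻ L, H L) := by
        congr 1
        rw [← lintegral_map hHmeas (measurable_const_mul R),
          Real.map_volume_mul_left hR0, lintegral_smul_measure, smul_eq_mul]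
    _ = ENNReal.ofReal (2 * Real.pi / R) *
          ∫⁻ p : ℝ × ℝ in {p : ℝ × ℝ | p.2 ^ 2 ≤ 2 * R ^ 2 * (p.1 - c)},
            ENNReal.ofReal (f p.1 p.2) := by
        have hLH : ∫⁻ L, H L =
            ∫⁻ p : ℝ × ℝ in {p : ℝ × ℝ | p.2 ^ 2 ≤ 2 * R ^ 2 * (p.1 - c)},
              ENNReal.ofReal (f p.1 p.2) := by
          have h1 : ∫⁻ L, H L = ∫⁻ p : ℝ × ℝ, K p := by
            rw [hHdef]
            simp only
            rw [Measure.volume_eq_prod ℝ ℝ, lintegral_prod_symm K hKmeas.aemeasurable]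
          rw [h1, hKdef, lintegral_indicator hTmeas]
          refine setLIntegral_congr ?_
          -- T =ᵐ S
          have hR2 : (0:ℝ) < 2 * R ^ 2 := by positivity
          have hTS : T ⊆ {p : ℝ × ℝ | p.2 ^ 2 ≤ 2 * R ^ 2 * (p.1 - c)} := by
            intro p hp
            have hp' : p.2 ^ 2 / (2 * R ^ 2) + c < p.1 := hp
            have h3 := (div_lt_iff₀ hR2).1 (by linarith : p.2 ^ 2 / (2 * R ^ 2) < p.1 - c)
            show p.2 ^ 2 ≤ 2 * R ^ 2 * (p.1 - c)
            linarith [h3, (by ring : (p.1 - c) * (2 * R ^ 2) = 2 * R ^ 2 * (p.1 - c))]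
          have hnull : volume ({p : ℝ × ℝ | p.2 ^ 2 ≤ 2 * R ^ 2 * (p.1 - c)} \ T) = 0 := by
            have hA : {p : ℝ × ℝ | p.2 ^ 2 ≤ 2 * R ^ 2 * (p.1 - c)} \ T ⊆
                {p : ℝ × ℝ | p.1 = p.2 ^ 2 / (2 * R ^ 2) + c} := by
              rintro p ⟨hpS, hpT⟩
              have hS' : p.2 ^ 2 ≤ 2 * R ^ 2 * (p.1 - c) := hpS
              have hT' : ¬ (p.2 ^ 2 / (2 * R ^ 2) + c < p.1) := hpT
              push_neg at hT'
              have h2 : p.2 ^ 2 / (2 * R ^ 2) + c ≤ p.1 := by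
                have hdiv : p.2 ^ 2 / (2 * R ^ 2) ≤ p.1 - c :=
                  (div_le_iff₀ hR2).2 (by nlinarith [hS'])
                linarith
              exact le_antisymm hT' h2
            refine measure_mono_null hA ?_
            have hAm : MeasurableSet {p : ℝ × ℝ | p.1 = p.2 ^ 2 / (2 * R ^ 2) + c} :=
              measurableSet_eq_fun measurable_fst (by fun_prop)
            rw [Measure.volume_eq_prod ℝ ℝ, Measure.prod_apply hAm]
            have hz : ∀ E : ℝ, volume (Prod.mk E ⁻¹'
                {p : ℝ × ℝ | p.1 = p.2 ^ 2 / (2 * R ^ 2) + c}) = 0 := by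
              intro E
              have hzsub : Prod.mk E ⁻¹' {p : ℝ × ℝ | p.1 = p.2 ^ 2 / (2 * R ^ 2) + c} ⊆
                  ({Real.sqrt (2 * R ^ 2 * (E - c)),
                    -Real.sqrt (2 * R ^ 2 * (E - c))} : Set ℝ) := by
                intro L hL
                have hL' : E = L ^ 2 / (2 * R ^ 2) + c := hL
                have hk : 2 * R ^ 2 * (E - c) = L ^ 2 := by
                  field_simp at hL'
                  linarith
                have habs : Real.sqrt (2 * R ^ 2 * (E - c)) = |L| := by
                  rw [hk, Real.sqrt_sq_eq_abs]
                rcases abs_cases L with ⟨h1, _⟩ | ⟨h1, _⟩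
                · left; rw [habs, h1]
                · right; rw [habs, h1, neg_neg]; exact Set.mem_singleton _
              exact measure_mono_null hzsub ((Set.toFinite _).measure_zero _)
            simp only [hz, lintegral_zero]
          rw [ae_eq_set]
          refine ⟨?_, hnull⟩
          rw [Set.diff_eq_empty.2 hTS]
          exact measure_empty
        rw [hLH, ← mul_assoc, ← ENNReal.ofReal_mul (by positivity)]
        congr 2
        rw [abs_of_pos (inv_pos.2 hR), div_eq_mul_inv]

/-- Density of an axisymmetric two-integral distribution `F = f(E, L_z)`:
for `R = √(x²+y²) > 0`,
`ρ = (2π/R)·∬_{L_z² ≤ 2R²(E−Φ)} f(E,L_z) dE dL_z`; at fixed `R` the density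
depends on `z` only through the potential. -/
theorem stmt8 (f : ℝ → ℝ → ℝ) (Φ : EuclideanSpace ℝ (Fin 3) → ℝ) (ψ : ℝ → ℝ → ℝ)
    (hf : Measurable (fun p : ℝ × ℝ => f p.1 p.2)) (hf0 : ∀ E L, 0 ≤ f E L)
    (haxi : ∀ r : EuclideanSpace ℝ (Fin 3),
      Φ r = ψ (Real.sqrt ((r 0) ^ 2 + (r 1) ^ 2)) (r 2)) :
    (∀ r : EuclideanSpace ℝ (Fin 3), 0 < Real.sqrt ((r 0) ^ 2 + (r 1) ^ 2) →
      (∫ v : EuclideanSpace ℝ (Fin 3),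
          f (‖v‖ ^ 2 / 2 + Φ r) (r 0 * v 1 - r 1 * v 0)) =
        (2 * Real.pi / Real.sqrt ((r 0) ^ 2 + (r 1) ^ 2)) *
          ∫ p : ℝ × ℝ in {p : ℝ × ℝ |
              p.2 ^ 2 ≤ 2 * ((r 0) ^ 2 + (r 1) ^ 2) * (p.1 - Φ r)},
            f p.1 p.2) ∧
    (∀ r₁ r₂ : EuclideanSpace ℝ (Fin 3),
      Real.sqrt ((r₁ 0) ^ 2 + (r₁ 1) ^ 2) = Real.sqrt ((r₂ 0) ^ 2 + (r₂ 1) ^ 2) →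
      Φ r₁ = Φ r₂ →
      (∫ v : EuclideanSpace ℝ (Fin 3),
          f (‖v‖ ^ 2 / 2 + Φ r₁) (r₁ 0 * v 1 - r₁ 1 * v 0)) =
        ∫ v : EuclideanSpace ℝ (Fin 3),
          f (‖v‖ ^ 2 / 2 + Φ r₂) (r₂ 0 * v 1 - r₂ 1 * v 0)) := by
  have hmeasInt : ∀ (c x y : ℝ), Measurable fun v : EuclideanSpace ℝ (Fin 3) =>
      f (‖v‖ ^ 2 / 2 + c) (x * v 1 - y * v 0) := by
    intro c x y
    have m1 : Measurable fun v : EuclideanSpace ℝ (Fin 3) => v 1 :=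
      (EuclideanSpace.proj (1 : Fin 3)).continuous.measurable
    have m0 : Measurable fun v : EuclideanSpace ℝ (Fin 3) => v 0 :=
      (EuclideanSpace.proj (0 : Fin 3)).continuous.measurable
    have hg : Measurable fun v : EuclideanSpace ℝ (Fin 3) =>
        (‖v‖ ^ 2 / 2 + c, x * v 1 - y * v 0) :=
      (((measurable_norm.pow_const 2).div_const 2).add_const c).prodMk
        ((m1.const_mul x).sub (m0.const_mul y))
    exact hf.comp hg
  have conv1 : ∀ (c x y : ℝ),
      (∫ v : EuclideanSpace ℝ (Fin 3), f (‖v‖ ^ 2 / 2 + c) (x * v 1 - y * v 0)) =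
      (∫⁻ v : EuclideanSpace ℝ (Fin 3),
        ENNReal.ofReal (f (‖v‖ ^ 2 / 2 + c) (x * v 1 - y * v 0))).toReal := by
    intro c x y
    rw [MeasureTheory.integral_eq_lintegral_of_nonneg_ae
      (Filter.Eventually.of_forall fun v => hf0 _ _)
      (hmeasInt c x y).aestronglyMeasurable]
  have conv2 : ∀ S : Set (ℝ × ℝ),
      (∫ p : ℝ × ℝ in S, f p.1 p.2) =
      (∫⁻ p : ℝ × ℝ in S, ENNReal.ofReal (f p.1 p.2)).toReal := by
    intro S
    rw [MeasureTheory.integral_eq_lintegral_of_nonneg_ae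
      (Filter.Eventually.of_forall fun p => hf0 _ _)
      hf.aestronglyMeasurable.restrict]
  constructor
  · intro r hRpos
    set R := Real.sqrt ((r 0) ^ 2 + (r 1) ^ 2) with hRdef
    have hsq : (r 0) ^ 2 + (r 1) ^ 2 = R ^ 2 :=
      (Real.sq_sqrt (by positivity)).symm
    have hkey := key_lintegral f hf hRpos hsq (Φ r)
    rw [conv1 (Φ r) (r 0) (r 1), conv2, hsq, hkey, ENNReal.toReal_mul,
      ENNReal.toReal_ofReal (div_nonneg (by positivity) hRpos.le)]
  · intro r₁ r₂ hReq hΦeq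
    by_cases hR : 0 < Real.sqrt ((r₁ 0) ^ 2 + (r₁ 1) ^ 2)
    · set R := Real.sqrt ((r₁ 0) ^ 2 + (r₁ 1) ^ 2) with hRdef
      have hsq₁ : (r₁ 0) ^ 2 + (r₁ 1) ^ 2 = R ^ 2 :=
        (Real.sq_sqrt (by positivity)).symm
      have hsq₂ : (r₂ 0) ^ 2 + (r₂ 1) ^ 2 = R ^ 2 := by
        rw [hReq]
        exact (Real.sq_sqrt (by positivity)).symm
      rw [conv1 (Φ r₁) (r₁ 0) (r₁ 1), conv1 (Φ r₂) (r₂ 0) (r₂ 1)]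
      congr 1
      rw [key_lintegral f hf hR hsq₁ (Φ r₁), key_lintegral f hf hR hsq₂ (Φ r₂), hΦeq]
    · have hz₁ : (r₁ 0) ^ 2 + (r₁ 1) ^ 2 = 0 := by
        have h0 : Real.sqrt ((r₁ 0) ^ 2 + (r₁ 1) ^ 2) = 0 :=
          le_antisymm (not_lt.1 hR) (Real.sqrt_nonneg _)
        exact (Real.sqrt_eq_zero (by positivity)).1 h0
      have hz₂ : (r₂ 0) ^ 2 + (r₂ 1) ^ 2 = 0 := by
        have h0 : Real.sqrt ((r₂ 0) ^ 2 + (r₂ 1) ^ 2) = 0 := by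
          rw [← hReq]
          exact le_antisymm (not_lt.1 hR) (Real.sqrt_nonneg _)
        exact (Real.sqrt_eq_zero (by positivity)).1 h0
      have h10 : r₁ 0 = 0 := by nlinarith [sq_nonneg (r₁ 0), sq_nonneg (r₁ 1)]
      have h11 : r₁ 1 = 0 := by nlinarith [sq_nonneg (r₁ 0), sq_nonneg (r₁ 1)]
      have h20 : r₂ 0 = 0 := by nlinarith [sq_nonneg (r₂ 0), sq_nonneg (r₂ 1)]
      have h21 : r₂ 1 = 0 := by nlinarith [sq_nonneg (r₂ 0), sq_nonneg (r₂ 1)]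
      refine integral_congr_ae (Filter.Eventually.of_forall fun v => ?_)
      rw [h10, h11, h20, h21, hΦeq]
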